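/- Let 1 ≤ r ≤ n and let 𝓕 ⊆ 𝓘^r(M_n) be an intersecting family (any two members have nonempty intersection). Then |𝓕| ≤ 2^{r−1}·C(n−1, r−1). -/

import Mathlib

/-- The partner of a vertex `v` in the perfect matching `Mₙ` on `{1,…,2n}`:
vertices `i` and `i+n` (for `1 ≤ i ≤ n`) are joined by an edge. -/
def partnerMn (n v : ℕ) : ℕ := if v ≤ n then v + n else v - n

/-- `A` is an independent set of vertices of the perfect matching graph `Mₙ`. -/
def IsIndepMn (n : ℕ) (A : Finset ℕ) : Prop :=
  A ⊆ Finset.Icc 1 (2 * n) ∧ ∀ i ∈ Finset.Icc 1 n, ¬(i ∈ A ∧ i + n ∈ A)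

/-- The independence number `α(Mₙ)` of the perfect matching graph `Mₙ`. -/
noncomputable def indepNumMn (n : ℕ) : ℕ := sSup {k : ℕ | ∃ A : Finset ℕ, IsIndepMn n A ∧ A.card = k}

/-- `𝓘ʳ(Mₙ)`: the family of all independent `r`-subsets of `V(Mₙ)`. -/
def famI (n r : ℕ) : Set (Finset ℕ) := {A | A.card = r ∧ IsIndepMn n A}

/-- `𝓜ʳ(Mₙ)`: the family of all `r`-subsets of `V(Mₙ)` containing an
independent set of maximum size `α(Mₙ)`. -/
def famM (n r : ℕ) : Set (Finset ℕ) :=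
  {A | A ⊆ Finset.Icc 1 (2 * n) ∧ A.card = r ∧
    ∃ B ⊆ A, IsIndepMn n B ∧ B.card = indepNumMn n}

/-- `𝓟ʳ(Mₙ) = 𝓘ʳ(Mₙ) ∪ 𝓜ʳ(Mₙ)`. -/
def famP (n r : ℕ) : Set (Finset ℕ) := famI n r ∪ famM n r

/-- A family is `k`-wise intersecting: any `k` (not necessarily distinct) members
have a common element. -/
def KWiseIntersecting (k : ℕ) (𝓕 : Finset (Finset ℕ)) : Prop :=
  ∀ f : Fin k → Finset ℕ, (∀ i, f i ∈ 𝓕) → ∃ v, ∀ i, v ∈ f i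


namespace BL

lemma mod_two_cases (a m : ℕ) (hm : 0 < m) (h : a < 2 * m) :
    a % m = if m ≤ a then a - m else a := by
  split_ifs with h'
  · rw [Nat.mod_eq_sub_mod h', Nat.mod_eq_of_lt (by omega)]
  · exact Nat.mod_eq_of_lt (by omega)

/-- vertex appearing at (cyclic) position `q` in the arrangement given by `(σ, δ)`. -/
def vtx (n : ℕ) (hn : 0 < n) (σ : Fin n ↪ Fin n) (δ : Fin n → Bool) (q : ℕ) : ℕ :=
  (σ ⟨q % (2 * n) % n, Nat.mod_lt _ hn⟩).val + 1 +
    (if xor (δ ⟨q % (2 * n) % n, Nat.mod_lt _ hn⟩) (decide (n ≤ q % (2 * n))) then n else 0)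

lemma vtx_inj (n : ℕ) (hn : 0 < n) (σ : Fin n ↪ Fin n) (δ : Fin n → Bool) {q q' : ℕ}
    (h : vtx n hn σ δ q = vtx n hn σ δ q') : q % (2 * n) = q' % (2 * n) := by
  unfold vtx at h
  set e : Fin n := ⟨q % (2 * n) % n, Nat.mod_lt _ hn⟩ with he
  set e' : Fin n := ⟨q' % (2 * n) % n, Nat.mod_lt _ hn⟩ with he'
  have hb : (σ e).val < n := (σ e).isLt
  have hb' : (σ e').val < n := (σ e').isLt
  have hee : e = e' := by
    apply σ.injective
    apply Fin.ext
    split_ifs at h <;> omega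
  have hss : (n ≤ q % (2 * n)) ↔ (n ≤ q' % (2 * n)) := by
    rw [hee] at h
    split_ifs at h with h1 h2 h2
    · cases hδ : δ e' <;> simp [hδ] at h1 h2 <;> omega
    · omega
    · omega
    · cases hδ : δ e' <;> simp [hδ] at h1 h2 <;> omega
  have h1 : q % (2 * n) % n = q' % (2 * n) % n := congrArg Fin.val hee
  have h2 : q % (2 * n) < 2 * n := Nat.mod_lt _ (by omega)
  have h3 : q' % (2 * n) < 2 * n := Nat.mod_lt _ (by omega)
  rw [mod_two_cases _ _ hn h2, mod_two_cases _ _ hn h3] at h1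
  split_ifs at h1 <;> omega

/-- the window of `r` consecutive vertices starting at position `t`. -/
def Wnd (n r : ℕ) (hn : 0 < n) (σ : Fin n ↪ Fin n) (δ : Fin n → Bool) (t : ℕ) : Finset ℕ :=
  (Finset.range r).image (fun j => vtx n hn σ δ (t + j))

lemma overlap {n r : ℕ} (hn : 0 < n) (σ : Fin n ↪ Fin n) (δ : Fin n → Bool) {t s v : ℕ}
    (hv : v ∈ Wnd n r hn σ δ t) (hv' : v ∈ Wnd n r hn σ δ s) :
    ∃ j < r, ∃ j' < r, (t + j) % (2 * n) = (s + j') % (2 * n) := by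
  simp only [Wnd, Finset.mem_image, Finset.mem_range] at hv hv'
  obtain ⟨j, hj, hje⟩ := hv
  obtain ⟨j', hj', hje'⟩ := hv'
  exact ⟨j, hj, j', hj', vtx_inj n hn σ δ (hje.trans hje'.symm)⟩

lemma katona (n r : ℕ) (hn : 0 < n) (hr : 1 ≤ r) (hrn : r ≤ n)
    (𝓕 : Finset (Finset ℕ))
    (hint : ∀ A ∈ 𝓕, ∀ B ∈ 𝓕, ∃ v, v ∈ A ∧ v ∈ B)
    (σ : Fin n ↪ Fin n) (δ : Fin n → Bool) :
    (Finset.univ.filter (fun t : Fin (2 * n) => Wnd n r hn σ δ t.val ∈ 𝓕)).card ≤ r := by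
  set S := Finset.univ.filter (fun t : Fin (2 * n) => Wnd n r hn σ δ t.val ∈ 𝓕) with hS
  rcases S.eq_empty_or_nonempty with hSe | ⟨t0, ht0⟩
  · simp [hSe]
  have hmemS : ∀ t : Fin (2 * n), t ∈ S → Wnd n r hn σ δ t.val ∈ 𝓕 := by
    intro t ht; exact (Finset.mem_filter.1 ht).2
  -- cyclic distance from t0
  set d : Fin (2 * n) → ℕ := fun t => (t.val + (2 * n - t0.val)) % (2 * n) with hd
  have hdlt : ∀ t, d t < 2 * n := fun t => Nat.mod_lt _ (by omega)
  have hdmod : ∀ t, (t.val + (2 * n - t0.val)) ≡ d t [MOD 2 * n] :=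
    fun t => (Nat.mod_modEq _ _).symm
  -- claim 3 : no two windows at cyclic distance exactly r
  have claim3 : ∀ t ∈ S, ∀ t' ∈ S, (t'.val + r) ≡ t.val [MOD 2 * n] → False := by
    intro t ht t' ht' hmod
    obtain ⟨v, hv, hv'⟩ := hint _ (hmemS t ht) _ (hmemS t' ht')
    obtain ⟨j, hj, j', hj', hjj⟩ := overlap hn σ δ hv hv'
    have h1 : (t.val + j) ≡ (t'.val + j') [MOD 2 * n] := hjj
    have h2 : t'.val + (r + j) ≡ t'.val + j' [MOD 2 * n] := by
      calc t'.val + (r + j) = (t'.val + r) + j := by ring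
        _ ≡ t.val + j [MOD 2 * n] := hmod.add_right j
        _ ≡ t'.val + j' [MOD 2 * n] := h1
    have h3 : r + j ≡ j' [MOD 2 * n] := Nat.ModEq.add_left_cancel' _ h2
    have h4 : (r + j) % (2 * n) = j' % (2 * n) := h3
    rw [Nat.mod_eq_of_lt (by omega), Nat.mod_eq_of_lt (by omega)] at h4
    omega
  -- claim 1 : the cyclic distance of any member of S from t0 is < r or > 2n - r
  have claim1 : ∀ t ∈ S, d t < r ∨ (2 * n - r < d t) := by
    intro t ht
    obtain ⟨v, hv, hv'⟩ := hint _ (hmemS t ht) _ (hmemS t0 ht0)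
    obtain ⟨j, hj, j', hj', hjj⟩ := overlap hn σ δ hv hv'
    have h1 : (t.val + j) ≡ (t0.val + j') [MOD 2 * n] := hjj
    have h2 : d t + j ≡ j' [MOD 2 * n] := by
      have e0 : t0.val ≤ 2 * n := le_of_lt t0.isLt
      calc d t + j ≡ (t.val + (2 * n - t0.val)) + j [MOD 2 * n] := ((hdmod t).symm).add_right j
        _ = (t.val + j) + (2 * n - t0.val) := by ring
        _ ≡ (t0.val + j') + (2 * n - t0.val) [MOD 2 * n] := h1.add_right _
        _ = j' + 2 * n := by omega
        _ ≡ j' + 0 [MOD 2 * n] := Nat.ModEq.add_left j' (Nat.modEq_zero_iff_dvd.2 dvd_rfl)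
        _ = j' := by ring
    have h3 : (d t + j) % (2 * n) = j' % (2 * n) := h2
    rw [Nat.mod_eq_of_lt (show j' < 2 * n by omega)] at h3
    have h5 := hdlt t
    rw [mod_two_cases _ _ (by omega) (by omega)] at h3
    split_ifs at h3 <;> omega
  -- claim 2 : d is injective on S
  have claim2 : ∀ t t' : Fin (2 * n), d t = d t' → t = t' := by
    intro t t' hdd
    have h1 : (t.val + (2 * n - t0.val)) ≡ (t'.val + (2 * n - t0.val)) [MOD 2 * n] :=
      (hdmod t).trans (hdd ▸ (hdmod t').symm)
    have h2 : t.val ≡ t'.val [MOD 2 * n] := Nat.ModEq.add_right_cancel' _ h1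
    have h3 : t.val % (2 * n) = t'.val % (2 * n) := h2
    rw [Nat.mod_eq_of_lt t.isLt, Nat.mod_eq_of_lt t'.isLt] at h3
    exact Fin.ext h3
  -- the mixed case yields cyclic distance exactly r, contradiction
  have mixed : ∀ t ∈ S, ∀ t' ∈ S, d t' = d t + (2 * n - r) → False := by
    intro t ht t' ht' hdd
    apply claim3 t ht t' ht'
    have h2 : (t'.val + (2 * n - t0.val)) ≡ d t + (2 * n - r) [MOD 2 * n] := hdd ▸ hdmod t'
    have h6 : t'.val + r + (2 * n - t0.val) ≡ t.val + (2 * n - t0.val) [MOD 2 * n] := by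
      calc t'.val + r + (2 * n - t0.val) = (t'.val + (2 * n - t0.val)) + r := by ring
        _ ≡ (d t + (2 * n - r)) + r [MOD 2 * n] := h2.add_right r
        _ = d t + 2 * n := by omega
        _ ≡ d t + 0 [MOD 2 * n] := Nat.ModEq.add_left _ (Nat.modEq_zero_iff_dvd.2 dvd_rfl)
        _ = d t := by ring
        _ ≡ t.val + (2 * n - t0.val) [MOD 2 * n] := (hdmod t).symm
    exact Nat.ModEq.add_right_cancel' _ h6
  -- assemble: map each t ∈ S to its "key" in range r, injectively
  have : S.card ≤ (Finset.range r).card := by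
    apply Finset.card_le_card_of_injOn (fun t => if d t < r then d t else d t - (2 * n - r))
    · intro t ht
      simp only [Finset.mem_coe, Finset.mem_range]
      rcases claim1 t ht with h | h
      · rw [if_pos h]; exact h
      · rw [if_neg (by omega)]
        have := hdlt t; omega
    · intro t ht t' ht' hkey
      simp only at hkey
      rcases claim1 t ht with h | h <;> rcases claim1 t' ht' with h' | h'
      · rw [if_pos h, if_pos h'] at hkey; exact claim2 _ _ hkey
      · rw [if_pos h, if_neg (by omega)] at hkey
        exact (mixed t ht t' ht' (by have := hdlt t'; omega)).elim
      · rw [if_neg (by omega), if_pos h'] at hkey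
        exact (mixed t' ht' t ht (by have := hdlt t; omega)).elim
      · rw [if_neg (by omega), if_neg (by omega)] at hkey
        have := hdlt t; have := hdlt t'
        exact claim2 _ _ (by omega)
  simpa using this

/-! ### Counting machinery -/

/-- element index (in `[0,n)`) of a vertex `a ∈ [1,2n]`. -/
def elemN (n a : ℕ) : ℕ := (a - 1) % n

/-- sign of a vertex `a ∈ [1,2n]`. -/
def sgn (n a : ℕ) : Bool := decide (n < a)

/-- slot index of the residue `e` relative to starting position `t`. -/
def jOf (n t e : ℕ) : ℕ := (e + n - t % n) % n

lemma jOf_lt (n t e : ℕ) (hn : 0 < n) : jOf n t e < n := Nat.mod_lt _ hn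

lemma elemN_lt (n a : ℕ) (hn : 0 < n) : elemN n a < n := Nat.mod_lt _ hn

lemma vertex_eq (n a : ℕ) (ha : a ∈ Finset.Icc 1 (2 * n)) :
    a = elemN n a + 1 + (if sgn n a then n else 0) := by
  simp only [Finset.mem_Icc] at ha
  have hn : 0 < n := by omega
  unfold elemN sgn
  rw [mod_two_cases (a - 1) n hn (by omega)]
  split_ifs with h1 h2 <;> simp only [decide_eq_true_eq] at * <;> omega

lemma jOf_slot (n t j : ℕ) (hn : 0 < n) (hj : j < n) : jOf n t ((t + j) % n) = j := by
  unfold jOf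
  have hc : t % n < n := Nat.mod_lt _ hn
  have h1 : (t + j) % n = (t % n + j) % n := by
    conv_lhs => rw [Nat.add_mod, Nat.mod_eq_of_lt hj]
  rw [h1]
  set c := t % n
  set x := (c + j) % n with hx
  have hxlt : x < n := Nat.mod_lt _ hn
  have h2 : (x + n - c) + c ≡ j + c [MOD n] := by
    calc (x + n - c) + c = x + n := by omega
      _ ≡ x + 0 [MOD n] := Nat.ModEq.add_left x (Nat.modEq_zero_iff_dvd.2 dvd_rfl)
      _ = x := by ring
      _ ≡ c + j [MOD n] := Nat.mod_modEq _ _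
      _ = j + c := by ring
  have h3 : (x + n - c) ≡ j [MOD n] := Nat.ModEq.add_right_cancel' c h2
  have h4 : (x + n - c) % n = j % n := h3
  rwa [Nat.mod_eq_of_lt hj] at h4

lemma jOf_inv (n t e : ℕ) (hn : 0 < n) (he : e < n) : (t + jOf n t e) % n = e := by
  have hc : t % n < n := Nat.mod_lt _ hn
  set c := t % n
  set j := jOf n t e with hj
  have hjlt : j < n := jOf_lt n t e hn
  have h1 : (t + j) % n = (c + j) % n := by
    conv_lhs => rw [Nat.add_mod, Nat.mod_eq_of_lt hjlt]
  have h2 : (c + j) ≡ e [MOD n] := by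
    calc c + j ≡ c + (e + n - c) [MOD n] := Nat.ModEq.add_left c (Nat.mod_modEq _ _)
      _ = e + n := by omega
      _ ≡ e + 0 [MOD n] := Nat.ModEq.add_left e (Nat.modEq_zero_iff_dvd.2 dvd_rfl)
      _ = e := by ring
  have h3 : (c + j) % n = e % n := h2
  rw [h1, h3, Nat.mod_eq_of_lt he]

/-- the sorted list of the elements of `A`. -/
def aL (A : Finset ℕ) : List ℕ := A.sort (· ≤ ·)

/-- the sorted list of residues not used by the window starting at `t`. -/
def cE (n r t : ℕ) : List ℕ := ((Finset.range n).filter (fun e => ¬ jOf n t e < r)).sort (· ≤ ·)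

/-- the sorted list of element-indices not used by `A`. -/
def cF (n : ℕ) (A : Finset ℕ) : List ℕ :=
  ((Finset.range n).filter (fun e => ∀ a ∈ A, elemN n a ≠ e)).sort (· ≤ ·)

lemma aL_length (A : Finset ℕ) : (aL A).length = A.card := Finset.length_sort _
lemma aL_nodup (A : Finset ℕ) : (aL A).Nodup := Finset.sort_nodup _ _
lemma aL_mem {A : Finset ℕ} {a : ℕ} : a ∈ aL A ↔ a ∈ A := Finset.mem_sort _

lemma cE_mem {n r t e : ℕ} : e ∈ cE n r t ↔ e < n ∧ ¬ jOf n t e < r := by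
  simp [cE, Finset.mem_sort, Finset.mem_filter, Finset.mem_range]
lemma cE_nodup (n r t : ℕ) : (cE n r t).Nodup := Finset.sort_nodup _ _
lemma cF_mem {n : ℕ} {A : Finset ℕ} {e : ℕ} :
    e ∈ cF n A ↔ e < n ∧ ∀ a ∈ A, elemN n a ≠ e := by
  simp [cF, Finset.mem_sort, Finset.mem_filter, Finset.mem_range]
lemma cF_nodup (n : ℕ) (A : Finset ℕ) : (cF n A).Nodup := Finset.sort_nodup _ _

lemma cE_length (n r t : ℕ) (hn : 0 < n) (hrn : r ≤ n) : (cE n r t).length = n - r := by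
  have hlen : (cE n r t).length
      = ((Finset.range n).filter (fun e => ¬ jOf n t e < r)).card := Finset.length_sort _
  have hpos : ((Finset.range n).filter (fun e => jOf n t e < r)).card = r := by
    have hb := Finset.card_bij' (s := (Finset.range n).filter (fun e => jOf n t e < r))
      (t := Finset.range r) (fun e _ => jOf n t e) (fun j _ => (t + j) % n) ?_ ?_ ?_ ?_
    · rw [hb, Finset.card_range]
    · intro e he
      simp only [Finset.mem_filter, Finset.mem_range] at he ⊢
      exact he.2
    · intro j hj
      simp only [Finset.mem_range] at hj
      simp only [Finset.mem_filter, Finset.mem_range]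
      constructor
      · exact Nat.mod_lt _ hn
      · rw [jOf_slot n t j hn (by omega)]; exact hj
    · intro e he
      simp only [Finset.mem_filter, Finset.mem_range] at he
      exact jOf_inv n t e hn he.1
    · intro j hj
      simp only [Finset.mem_range] at hj
      exact jOf_slot n t j hn (by omega)
  have := Finset.card_filter_add_card_filter_not
    (s := Finset.range n) (p := fun e => jOf n t e < r)
  rw [Finset.card_range] at this
  omega

lemma elemN_injOn {n : ℕ} {A : Finset ℕ} (hsub : A ⊆ Finset.Icc 1 (2 * n))
    (hind : ∀ i ∈ Finset.Icc 1 n, ¬(i ∈ A ∧ i + n ∈ A))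
    {a a' : ℕ} (ha : a ∈ A) (ha' : a' ∈ A) (h : elemN n a = elemN n a') : a = a' := by
  have hs := hsub ha; have hs' := hsub ha'
  simp only [Finset.mem_Icc] at hs hs'
  have hn : 0 < n := by omega
  have e1 := vertex_eq n a (hsub ha)
  have e2 := vertex_eq n a' (hsub ha')
  have hel : elemN n a < n := elemN_lt n a hn
  by_cases hsg : sgn n a = sgn n a'
  · rw [h, hsg] at e1; omega
  · exfalso
    have key : ∀ b b' : ℕ, b ∈ A → b' ∈ A → elemN n b = elemN n b' →
        sgn n b = false → sgn n b' = true → False := by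
      intro b b' hb hb' hebb hsb hsb'
      have f1 := vertex_eq n b (hsub hb)
      have f2 := vertex_eq n b' (hsub hb')
      rw [hsb] at f1; rw [hsb'] at f2
      norm_num at f1 f2
      apply hind (elemN n b + 1) (by simp only [Finset.mem_Icc]; constructor <;> [omega; exact elemN_lt n b hn])
      constructor
      · rwa [← f1]
      · have hb2 : elemN n b + 1 + n = b' := by omega
        rwa [hb2]
    rcases Bool.eq_false_or_eq_true (sgn n a) with h1 | h1 <;>
      rcases Bool.eq_false_or_eq_true (sgn n a') with h2 | h2
    · exact hsg (h1.trans h2.symm)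
    · exact key a' a ha' ha h.symm h2 h1
    · exact key a a' ha ha' h h1 h2
    · exact hsg (h1.trans h2.symm)

lemma cF_length (n r : ℕ) (hn : 0 < n) (hrn : r ≤ n) {A : Finset ℕ}
    (hcard : A.card = r) (hsub : A ⊆ Finset.Icc 1 (2 * n))
    (hind : ∀ i ∈ Finset.Icc 1 n, ¬(i ∈ A ∧ i + n ∈ A)) : (cF n A).length = n - r := by
  have hlen : (cF n A).length
      = ((Finset.range n).filter (fun e => ∀ a ∈ A, elemN n a ≠ e)).card := Finset.length_sort _
  have heq : (Finset.range n).filter (fun e => ∀ a ∈ A, elemN n a ≠ e)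
      = Finset.range n \ A.image (elemN n) := by
    ext e
    simp only [Finset.mem_filter, Finset.mem_sdiff, Finset.mem_range, Finset.mem_image]
    push_neg
    tauto
  have himg : (A.image (elemN n)).card = r := by
    rw [Finset.card_image_of_injOn (fun a ha a' ha' h => elemN_injOn hsub hind ha ha' h), hcard]
  have hss : A.image (elemN n) ⊆ Finset.range n := by
    intro e he
    simp only [Finset.mem_image] at he
    obtain ⟨a, _, rfl⟩ := he
    simp only [Finset.mem_range]
    exact elemN_lt n a hn
  rw [hlen, heq, Finset.card_sdiff_of_subset hss, Finset.card_range, himg]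

/-- extension of a function on `Fin m` to `ℕ`. -/
def fext (m : ℕ) (π : Fin m ↪ Fin m) (k : ℕ) : ℕ := if h : k < m then (π ⟨k, h⟩).val else k

lemma fext_lt {m : ℕ} (π : Fin m ↪ Fin m) {k : ℕ} (hk : k < m) : fext m π k < m := by
  unfold fext; rw [dif_pos hk]; exact (π ⟨k, hk⟩).isLt

lemma fext_inj {m : ℕ} (π : Fin m ↪ Fin m) {k k' : ℕ} (hk : k < m) (hk' : k' < m)
    (h : fext m π k = fext m π k') : k = k' := by
  unfold fext at h; rw [dif_pos hk, dif_pos hk'] at h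
  have := π.injective (Fin.ext h)
  exact congrArg Fin.val this

/-- extension of a Bool-valued function on `Fin m` to `ℕ`. -/
def bext (m : ℕ) (ε : Fin m → Bool) (k : ℕ) : Bool := if h : k < m then ε ⟨k, h⟩ else false

/-- the permutation part of the arrangement realizing `A` as the window at `t`. -/
def σf (n r : ℕ) (A : Finset ℕ) (t : ℕ) (π : Fin r ↪ Fin r) (ρ : Fin (n - r) ↪ Fin (n - r))
    (e : ℕ) : ℕ :=
  if jOf n t e < r then elemN n ((aL A).getD (fext r π (jOf n t e)) 0)
  else (cF n A).getD (fext (n - r) ρ ((cE n r t).idxOf e)) e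

/-- the sign part of the arrangement realizing `A` as the window at `t`. -/
def δf (n r : ℕ) (A : Finset ℕ) (t : ℕ) (π : Fin r ↪ Fin r) (ε : Fin (n - r) → Bool)
    (e : ℕ) : Bool :=
  if jOf n t e < r then
    xor (sgn n ((aL A).getD (fext r π (jOf n t e)) 0)) (decide (n ≤ (t + jOf n t e) % (2 * n)))
  else bext (n - r) ε ((cE n r t).idxOf e)

section Realize

variable {n r : ℕ} {A : Finset ℕ} (hn : 0 < n) (hr : 1 ≤ r) (hrn : r ≤ n)
  (hcard : A.card = r) (hsub : A ⊆ Finset.Icc 1 (2 * n))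
  (hind : ∀ i ∈ Finset.Icc 1 n, ¬(i ∈ A ∧ i + n ∈ A))
  {t : ℕ} (π : Fin r ↪ Fin r) (ρ : Fin (n - r) ↪ Fin (n - r)) (ε : Fin (n - r) → Bool)

include hcard in
lemma getD_mem {k : ℕ} (hk : k < r) : (aL A).getD k 0 ∈ A := by
  have hlen : k < (aL A).length := by rw [aL_length, hcard]; exact hk
  rw [List.getD_eq_getElem _ _ hlen]
  exact aL_mem.1 (List.getElem_mem hlen)

include hn hrn hcard hsub hind in
lemma σf_else_mem {e : ℕ} (he : e < n) (hj : ¬ jOf n t e < r) :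
    σf n r A t π ρ e ∈ cF n A := by
  have hecE : e ∈ cE n r t := cE_mem.2 ⟨he, hj⟩
  have hidx : (cE n r t).idxOf e < (cE n r t).length := List.idxOf_lt_length_iff.2 hecE
  rw [cE_length n r t hn hrn] at hidx
  have hflt : fext (n - r) ρ ((cE n r t).idxOf e) < (cF n A).length := by
    rw [cF_length n r hn hrn hcard hsub hind]
    exact fext_lt ρ hidx
  rw [σf, if_neg hj, List.getD_eq_getElem _ _ hflt]
  exact List.getElem_mem hflt

include hcard in
lemma σf_if_mem {e : ℕ} (hj : jOf n t e < r) :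
    σf n r A t π ρ e ∈ A.image (elemN n) := by
  rw [σf, if_pos hj]
  exact Finset.mem_image_of_mem _ (getD_mem hcard (fext_lt π hj))

include hn hr hrn hcard hsub hind in
lemma σf_lt {e : ℕ} (he : e < n) : σf n r A t π ρ e < n := by
  by_cases hj : jOf n t e < r
  · rw [σf, if_pos hj]; exact elemN_lt _ _ hn
  · exact (cF_mem.1 (σf_else_mem hn hrn hcard hsub hind π ρ he hj)).1

include hn hr hrn hcard hsub hind in
lemma σf_inj {e e' : ℕ} (he : e < n) (he' : e' < n)
    (h : σf n r A t π ρ e = σf n r A t π ρ e') : e = e' := by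
  by_cases hj : jOf n t e < r <;> by_cases hj' : jOf n t e' < r
  · simp only [σf] at h
    rw [if_pos hj, if_pos hj'] at h
    have h1 := elemN_injOn hsub hind (getD_mem hcard (fext_lt π hj))
      (getD_mem hcard (fext_lt π hj')) h
    have hlen : ∀ k : ℕ, k < r → k < (aL A).length := by
      intro k hk; rw [aL_length, hcard]; exact hk
    rw [List.getD_eq_getElem _ _ (hlen _ (fext_lt π hj)),
      List.getD_eq_getElem _ _ (hlen _ (fext_lt π hj'))] at h1
    have h2 := ((aL_nodup A).getElem_inj_iff).1 h1
    have h3 := fext_inj π hj hj' h2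
    rw [← jOf_inv n t e hn he, ← jOf_inv n t e' hn he', h3]
  · exfalso
    have h1 := σf_if_mem hcard π ρ hj
    have h2 := σf_else_mem hn hrn hcard hsub hind π ρ he' hj'
    rw [h] at h1
    obtain ⟨a, ha, hae⟩ := Finset.mem_image.1 h1
    exact (cF_mem.1 h2).2 a ha hae
  · exfalso
    have h1 := σf_if_mem hcard π ρ hj'
    have h2 := σf_else_mem hn hrn hcard hsub hind π ρ he hj
    rw [← h] at h1
    obtain ⟨a, ha, hae⟩ := Finset.mem_image.1 h1
    exact (cF_mem.1 h2).2 a ha hae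
  · simp only [σf] at h
    rw [if_neg hj, if_neg hj'] at h
    have hecE : e ∈ cE n r t := cE_mem.2 ⟨he, hj⟩
    have hecE' : e' ∈ cE n r t := cE_mem.2 ⟨he', hj'⟩
    have hidx : (cE n r t).idxOf e < n - r := by
      rw [← cE_length n r t hn hrn]; exact List.idxOf_lt_length_iff.2 hecE
    have hidx' : (cE n r t).idxOf e' < n - r := by
      rw [← cE_length n r t hn hrn]; exact List.idxOf_lt_length_iff.2 hecE'
    have hflen : ∀ k : ℕ, k < n - r → k < (cF n A).length := by
      intro k hk; rw [cF_length n r hn hrn hcard hsub hind]; exact hk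
    rw [List.getD_eq_getElem _ _ (hflen _ (fext_lt ρ hidx)),
      List.getD_eq_getElem _ _ (hflen _ (fext_lt ρ hidx'))] at h
    have h2 := ((cF_nodup n A).getElem_inj_iff).1 h
    have h3 := fext_inj ρ hidx hidx' h2
    exact (List.idxOf_inj hecE).1 h3

include hn hrn hcard hsub in
lemma vtx_realize (σE : Fin n ↪ Fin n) (hσ : ∀ e : Fin n, (σE e).val = σf n r A t π ρ e.val)
    (δE : Fin n → Bool) (hδ : ∀ e : Fin n, δE e = δf n r A t π ε e.val)
    {j : ℕ} (hj : j < r) :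
    vtx n hn σE δE (t + j) = (aL A).getD (fext r π j) 0 := by
  unfold vtx
  set q' := (t + j) % (2 * n) with hq'
  set e : Fin n := ⟨q' % n, Nat.mod_lt _ hn⟩ with he
  have hqn : q' % n = (t + j) % n := Nat.mod_mod_of_dvd _ (dvd_mul_left n 2)
  have hjof : jOf n t e.val = j := by
    show jOf n t (q' % n) = j
    rw [hqn]; exact jOf_slot n t j hn (lt_of_lt_of_le hj hrn)
  have hσe : (σE e).val = elemN n ((aL A).getD (fext r π j) 0) := by
    rw [hσ e]; simp only [σf]; rw [hjof, if_pos hj]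
  have hδe : δE e = xor (sgn n ((aL A).getD (fext r π j) 0)) (decide (n ≤ q')) := by
    rw [hδ e]; simp only [δf]; rw [hjof, if_pos hj, ← hq']
  rw [hσe, hδe, Bool.xor_assoc, Bool.xor_self, Bool.xor_false]
  exact (vertex_eq n _ (hsub (getD_mem hcard (fext_lt π hj)))).symm

include hn hrn hcard hsub in
lemma Wnd_realize (σE : Fin n ↪ Fin n) (hσ : ∀ e : Fin n, (σE e).val = σf n r A t π ρ e.val)
    (δE : Fin n → Bool) (hδ : ∀ e : Fin n, δE e = δf n r A t π ε e.val) :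
    Wnd n r hn σE δE t = A := by
  apply Finset.Subset.antisymm
  · intro v hv
    simp only [Wnd, Finset.mem_image, Finset.mem_range] at hv
    obtain ⟨j, hj, rfl⟩ := hv
    rw [vtx_realize hn hrn hcard hsub π ρ ε σE hσ δE hδ hj]
    exact getD_mem hcard (fext_lt π hj)
  · intro v hv
    have hvL : v ∈ aL A := aL_mem.2 hv
    obtain ⟨i, hi, hgi⟩ := List.getElem_of_mem hvL
    have hir : i < r := by rw [aL_length, hcard] at hi; exact hi
    obtain ⟨k, hk⟩ := (Finite.injective_iff_surjective.1 π.injective) ⟨i, hir⟩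
    simp only [Wnd, Finset.mem_image, Finset.mem_range]
    refine ⟨k.val, k.isLt, ?_⟩
    rw [vtx_realize hn hrn hcard hsub π ρ ε σE hσ δE hδ k.isLt]
    unfold fext
    rw [dif_pos k.isLt]
    have : (⟨k.val, k.isLt⟩ : Fin r) = k := rfl
    rw [this, hk]
    have hlen : i < (aL A).length := by rw [aL_length, hcard]; exact hir
    rw [List.getD_eq_getElem _ _ hlen]
    exact hgi

end Realize

lemma nodup_indexOf_getElem {α : Type*} [DecidableEq α] {l : List α} (h : l.Nodup) {k : ℕ}
    (hk : k < l.length) : l.idxOf l[k] = k := by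
  have hmem : l[k] ∈ l := List.getElem_mem hk
  have h1 : l.idxOf l[k] < l.length := List.idxOf_lt_length_iff.2 hmem
  have h2 : l[l.idxOf l[k]] = l[k] := List.getElem_idxOf h1
  exact h.getElem_inj_iff.1 h2

lemma fiber_card (n r : ℕ) (hn : 0 < n) (hr : 1 ≤ r) (hrn : r ≤ n) {A : Finset ℕ}
    (hcard : A.card = r) (hsub : A ⊆ Finset.Icc 1 (2 * n))
    (hind : ∀ i ∈ Finset.Icc 1 n, ¬(i ∈ A ∧ i + n ∈ A)) :
    2 * n * (Nat.factorial r * (Nat.factorial (n - r) * 2 ^ (n - r))) ≤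
      (Finset.univ.filter (fun x : (Fin n ↪ Fin n) × (Fin n → Bool) × Fin (2 * n) =>
        Wnd n r hn x.1 x.2.1 x.2.2.val = A)).card := by
  classical
  have hK : (Finset.univ :
      Finset (Fin (2 * n) × (Fin r ↪ Fin r) × (Fin (n - r) ↪ Fin (n - r)) × (Fin (n - r) → Bool))).card
      = 2 * n * (Nat.factorial r * (Nat.factorial (n - r) * 2 ^ (n - r))) := by
    simp [Finset.card_univ, Fintype.card_prod, Fintype.card_embedding_eq, Fintype.card_fun,
      Fintype.card_fin, Nat.descFactorial_self, Fintype.card_bool]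
  rw [← hK]
  -- the injection
  set Ψ : (Fin (2 * n) × (Fin r ↪ Fin r) × (Fin (n - r) ↪ Fin (n - r)) × (Fin (n - r) → Bool)) →
      ((Fin n ↪ Fin n) × (Fin n → Bool) × Fin (2 * n)) := fun x =>
    (⟨fun e => ⟨σf n r A x.1.val x.2.1 x.2.2.1 e.val,
        σf_lt hn hr hrn hcard hsub hind x.2.1 x.2.2.1 e.isLt⟩,
      fun e e' h => Fin.ext (σf_inj hn hr hrn hcard hsub hind x.2.1 x.2.2.1 e.isLt e'.isLt
        (congrArg Fin.val h))⟩,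
      fun e => δf n r A x.1.val x.2.1 x.2.2.2 e.val, x.1) with hΨ
  apply Finset.card_le_card_of_injOn Ψ
  · intro x _
    simp only [Finset.mem_coe, Finset.mem_filter, Finset.mem_univ, true_and, hΨ]
    exact Wnd_realize hn hrn hcard hsub x.2.1 x.2.2.1 x.2.2.2 _ (fun e => rfl) _ (fun e => rfl)
  · rintro ⟨t, π, ρ, ε⟩ - ⟨t', π', ρ', ε'⟩ - heq
    simp only [hΨ, Prod.mk.injEq] at heq
    obtain ⟨hσeq, hδeq, hteq⟩ := heq
    subst hteq
    have hσfun : ∀ e : ℕ, (he : e < n) → σf n r A t.val π ρ e = σf n r A t.val π' ρ' e := by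
      intro e he
      exact congrArg Fin.val (DFunLike.congr_fun hσeq ⟨e, he⟩)
    have hδfun : ∀ e : ℕ, (he : e < n) → δf n r A t.val π ε e = δf n r A t.val π' ε' e := by
      intro e he
      exact congrFun hδeq ⟨e, he⟩
    have hlenaL : ∀ k : ℕ, k < r → k < (aL A).length := by
      intro k hk; rw [aL_length, hcard]; exact hk
    have hπ : π = π' := by
      apply Function.Embedding.ext
      intro k
      set e : ℕ := (t.val + k.val) % n with he
      have helt : e < n := Nat.mod_lt _ hn
      have hjof : jOf n t.val e = k.val := jOf_slot n t.val k.val hn (lt_of_lt_of_le k.isLt hrn)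
      have h1 := hσfun e helt
      simp only [σf, hjof, if_pos k.isLt] at h1
      have h2 := elemN_injOn hsub hind (getD_mem hcard (fext_lt π k.isLt))
        (getD_mem hcard (fext_lt π' k.isLt)) h1
      rw [List.getD_eq_getElem _ _ (hlenaL _ (fext_lt π k.isLt)),
        List.getD_eq_getElem _ _ (hlenaL _ (fext_lt π' k.isLt))] at h2
      have h3 := ((aL_nodup A).getElem_inj_iff).1 h2
      unfold fext at h3
      rw [dif_pos k.isLt, dif_pos k.isLt] at h3
      exact Fin.ext h3
    subst hπ
    have hlencE : ∀ k : Fin (n - r), k.val < (cE n r t.val).length := by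
      intro k; rw [cE_length n r t.val hn hrn]; exact k.isLt
    have hlencF : ∀ k : ℕ, k < n - r → k < (cF n A).length := by
      intro k hk; rw [cF_length n r hn hrn hcard hsub hind]; exact hk
    have hcEfacts : ∀ k : Fin (n - r),
        (cE n r t.val)[k.val]'(hlencE k) < n ∧
          ¬ jOf n t.val ((cE n r t.val)[k.val]'(hlencE k)) < r ∧
          (cE n r t.val).idxOf ((cE n r t.val)[k.val]'(hlencE k)) = k.val := by
      intro k
      have hmem := List.getElem_mem (hlencE k)
      have := cE_mem.1 hmem
      exact ⟨this.1, this.2, nodup_indexOf_getElem (cE_nodup n r t.val) (hlencE k)⟩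
    have hρ : ρ = ρ' := by
      apply Function.Embedding.ext
      intro k
      obtain ⟨hlt, hjof, hidx⟩ := hcEfacts k
      have h1 := hσfun _ hlt
      simp only [σf, if_neg hjof, hidx] at h1
      rw [List.getD_eq_getElem _ _ (hlencF _ (fext_lt ρ k.isLt)),
        List.getD_eq_getElem _ _ (hlencF _ (fext_lt ρ' k.isLt))] at h1
      have h3 := ((cF_nodup n A).getElem_inj_iff).1 h1
      unfold fext at h3
      rw [dif_pos k.isLt, dif_pos k.isLt] at h3
      exact Fin.ext h3
    subst hρ
    have hε : ε = ε' := by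
      funext k
      obtain ⟨hlt, hjof, hidx⟩ := hcEfacts k
      have h1 := hδfun _ hlt
      simp only [δf, if_neg hjof, hidx, bext] at h1
      rw [dif_pos k.isLt, dif_pos k.isLt] at h1
      exact h1
    subst hε
    rfl

lemma arith (n r : ℕ) (hn : 1 ≤ n) (hr : 1 ≤ r) (hrn : r ≤ n) :
    Nat.factorial n * 2 ^ n * r =
      2 ^ (r - 1) * (n - 1).choose (r - 1) *
        (2 * n * (Nat.factorial r * (Nat.factorial (n - r) * 2 ^ (n - r)))) := by
  obtain ⟨n', rfl⟩ : ∃ n', n = n' + 1 := ⟨n - 1, by omega⟩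
  obtain ⟨r', rfl⟩ : ∃ r', r = r' + 1 := ⟨r - 1, by omega⟩
  have hrn' : r' ≤ n' := by omega
  have hfac : n'.choose r' * Nat.factorial r' * Nat.factorial (n' - r') = Nat.factorial n' :=
    Nat.choose_mul_factorial_mul_factorial hrn'
  have hsub : n' + 1 - (r' + 1) = n' - r' := by omega
  have h2pow : 2 ^ (n' + 1) = 2 ^ r' * 2 ^ (n' - r') * 2 := by
    rw [← pow_add, ← pow_succ]
    congr 1
    omega
  rw [hsub, Nat.add_sub_cancel, Nat.add_sub_cancel, Nat.factorial_succ n',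
    Nat.factorial_succ r', h2pow, ← hfac]
  ring

theorem main (n r : ℕ) (hn : 1 ≤ n) (hr : 1 ≤ r) (hrn : r ≤ n)
    (𝓕 : Finset (Finset ℕ))
    (h𝓕 : ∀ A ∈ 𝓕, A.card = r ∧ A ⊆ Finset.Icc 1 (2 * n) ∧
      ∀ i ∈ Finset.Icc 1 n, ¬(i ∈ A ∧ i + n ∈ A))
    (hint : ∀ A ∈ 𝓕, ∀ B ∈ 𝓕, ∃ v, v ∈ A ∧ v ∈ B) :
    𝓕.card ≤ 2 ^ (r - 1) * (n - 1).choose (r - 1) := by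
  classical
  have hn0 : 0 < n := hn
  set M := 2 * n * (Nat.factorial r * (Nat.factorial (n - r) * 2 ^ (n - r))) with hM
  set Dgood : Finset ((Fin n ↪ Fin n) × (Fin n → Bool) × Fin (2 * n)) :=
    Finset.univ.filter (fun x => Wnd n r hn0 x.1 x.2.1 x.2.2.val ∈ 𝓕) with hD
  -- upper bound on Dgood via Katona
  have hup : Dgood.card ≤ Nat.factorial n * 2 ^ n * r := by
    rw [hD, Finset.card_filter]
    rw [Fintype.sum_prod_type]
    have hstep : ∀ σ : Fin n ↪ Fin n,
        (∑ y : (Fin n → Bool) × Fin (2 * n),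
          if Wnd n r hn0 σ y.1 y.2.val ∈ 𝓕 then 1 else 0) ≤ 2 ^ n * r := by
      intro σ
      rw [Fintype.sum_prod_type]
      have hinner : ∀ δ : Fin n → Bool,
          (∑ t : Fin (2 * n), if Wnd n r hn0 σ δ t.val ∈ 𝓕 then 1 else 0) ≤ r := by
        intro δ
        rw [← Finset.card_filter]
        exact katona n r hn0 hr hrn 𝓕 hint σ δ
      calc (∑ δ : Fin n → Bool, ∑ t : Fin (2 * n),
              if Wnd n r hn0 σ δ t.val ∈ 𝓕 then 1 else 0)
          ≤ ∑ _δ : Fin n → Bool, r := Finset.sum_le_sum (fun δ _ => hinner δ)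
        _ = 2 ^ n * r := by
            rw [Finset.sum_const, Finset.card_univ, Fintype.card_fun, Fintype.card_bool,
              Fintype.card_fin, smul_eq_mul]
    calc (∑ σ : Fin n ↪ Fin n, ∑ y : (Fin n → Bool) × Fin (2 * n),
            if Wnd n r hn0 σ y.1 y.2.val ∈ 𝓕 then 1 else 0)
        ≤ ∑ _σ : Fin n ↪ Fin n, 2 ^ n * r := Finset.sum_le_sum (fun σ _ => hstep σ)
      _ = Nat.factorial n * 2 ^ n * r := by
          rw [Finset.sum_const, Finset.card_univ, Fintype.card_embedding_eq, Fintype.card_fin,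
            Nat.descFactorial_self, smul_eq_mul, mul_assoc]
  -- lower bound on Dgood via the fibers over 𝓕
  have hdown : 𝓕.card * M ≤ Dgood.card := by
    have hfib : Dgood.card = ∑ B ∈ 𝓕,
        (Dgood.filter (fun x => Wnd n r hn0 x.1 x.2.1 x.2.2.val = B)).card :=
      Finset.card_eq_sum_card_fiberwise (fun x hx => (Finset.mem_filter.1 hx).2)
    have hfibge : ∀ B ∈ 𝓕,
        M ≤ (Dgood.filter (fun x => Wnd n r hn0 x.1 x.2.1 x.2.2.val = B)).card := by
      intro B hB
      obtain ⟨hcard, hsubB, hindB⟩ := h𝓕 B hB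
      have heq : Dgood.filter (fun x => Wnd n r hn0 x.1 x.2.1 x.2.2.val = B)
          = Finset.univ.filter (fun x => Wnd n r hn0 x.1 x.2.1 x.2.2.val = B) := by
        ext x
        simp only [hD, Finset.filter_filter, Finset.mem_filter, Finset.mem_univ, true_and]
        constructor
        · rintro ⟨_, h2⟩; exact h2
        · intro h2; exact ⟨h2 ▸ hB, h2⟩
      rw [heq, hM]
      exact fiber_card n r hn0 hr hrn hcard hsubB hindB
    calc 𝓕.card * M = ∑ _B ∈ 𝓕, M := by rw [Finset.sum_const, smul_eq_mul]
      _ ≤ ∑ B ∈ 𝓕, (Dgood.filter (fun x => Wnd n r hn0 x.1 x.2.1 x.2.2.val = B)).card :=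
          Finset.sum_le_sum hfibge
      _ = Dgood.card := hfib.symm
  have hMpos : 0 < M := by
    rw [hM]
    have := Nat.factorial_pos r
    have := Nat.factorial_pos (n - r)
    positivity
  have hkey : 𝓕.card * M ≤ (2 ^ (r - 1) * (n - 1).choose (r - 1)) * M := by
    calc 𝓕.card * M ≤ Dgood.card := hdown
      _ ≤ Nat.factorial n * 2 ^ n * r := hup
      _ = (2 ^ (r - 1) * (n - 1).choose (r - 1)) * M := arith n r hn hr hrn
  exact Nat.le_of_mul_le_mul_right hkey hMpos

end BL

/-- **Bollobás–Leader theorem (bound).** An intersecting family of independent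
`r`-subsets of `Mₙ` (`1 ≤ r ≤ n`) has size at most `2^(r−1)·C(n−1, r−1)`. -/
theorem bollobas_leader_bound (n r : ℕ) (hn : 1 ≤ n) (hr : 1 ≤ r) (hrn : r ≤ n)
    (𝓕 : Finset (Finset ℕ)) (h𝓕 : ↑𝓕 ⊆ famI n r)
    (hint : ∀ A ∈ 𝓕, ∀ B ∈ 𝓕, ∃ v, v ∈ A ∧ v ∈ B) :
    𝓕.card ≤ 2 ^ (r - 1) * (n - 1).choose (r - 1) := by
  refine BL.main n r hn hr hrn 𝓕 ?_ hint
  intro A hA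
  obtain ⟨hcard, hsub, hind⟩ := h𝓕 hA
  exact ⟨hcard, hsub, hind⟩
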